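/- For the measure κ(dx) = √(3/(2π)) x^{-5/2} dx on (0,∞) and any α, λ > 0, ∫ κ(dx) ((1+αx) e^{-(α+λ)x} - 1 + λx) = -√(2/3) · √(α+λ) · (α - 2λ). -/

import Mathlib

open Real MeasureTheory Set Filter Topology
noncomputable def myH (a b l x : ℝ) : ℝ := (1 + a*x) * Real.exp (-b*x) - 1 + l*x
noncomputable def myH1 (a b l x : ℝ) : ℝ := l*(1 - Real.exp (-b*x)) - a*b*x*Real.exp (-b*x)
lemma exp_neg_le_quadratic {t : ℝ} (ht : 0 ≤ t) : Real.exp (-t) ≤ 1 - t + t^2/2 := by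
  have h1 : 1 + t + t^2/2 ≤ Real.exp t := Real.quadratic_le_exp_of_nonneg ht
  have h2 : Real.exp (-t) * Real.exp t = 1 := by rw [← Real.exp_add]; simp
  nlinarith [Real.exp_pos t, Real.exp_pos (-t)]

-- basic exp facts for t ≥ 0
lemma exp_neg_mem {t : ℝ} (ht : 0 ≤ t) :
    1 - t ≤ Real.exp (-t) ∧ Real.exp (-t) ≤ 1 := by
  constructor
  · linarith [Real.add_one_le_exp (-t)]
  · exact Real.exp_le_one_iff.2 (by linarith)

lemma abs_myH_le {a l : ℝ} (ha : 0 ≤ a) (hl : 0 ≤ l) {x : ℝ} (hx : 0 ≤ x) :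
    |myH a (a+l) l x| ≤ ((a+l)^2/2 + a*(a+l)) * x^2 := by
  set b := a + l with hb
  have hbx : 0 ≤ b * x := by positivity
  have h1 := exp_neg_le_quadratic hbx
  have h2 := (exp_neg_mem hbx).1
  have h3 := (exp_neg_mem hbx).2
  have key : myH a b l x = (Real.exp (-(b*x)) - 1 + b*x) + a*x*(Real.exp (-(b*x)) - 1) := by
    unfold myH; rw [hb]; ring_nf
  rw [key]
  have e1 : |Real.exp (-(b*x)) - 1 + b*x| ≤ (b*x)^2/2 := by
    rw [abs_le]; constructor <;> nlinarith
  have e2 : |a*x*(Real.exp (-(b*x)) - 1)| ≤ a*x*(b*x) := by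
    rw [abs_mul]
    have : |Real.exp (-(b*x)) - 1| ≤ b*x := by rw [abs_le]; constructor <;> nlinarith
    have hax : |a*x| = a*x := abs_of_nonneg (by positivity)
    rw [hax]
    exact mul_le_mul_of_nonneg_left this (by positivity)
  calc |(Real.exp (-(b*x)) - 1 + b*x) + a*x*(Real.exp (-(b*x)) - 1)|
      ≤ |Real.exp (-(b*x)) - 1 + b*x| + |a*x*(Real.exp (-(b*x)) - 1)| := abs_add_le _ _
    _ ≤ (b*x)^2/2 + a*x*(b*x) := add_le_add e1 e2
    _ = (b^2/2 + a*b) * x^2 := by ring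

lemma abs_myH1_le_lin {a b l : ℝ} (ha : 0 ≤ a) (hb : 0 ≤ b) (hl : 0 ≤ l) {x : ℝ} (hx : 0 ≤ x) :
    |myH1 a b l x| ≤ (l*b + a*b) * x := by
  have hbx : 0 ≤ b * x := by positivity
  have h2 := (exp_neg_mem hbx).1
  have h3 := (exp_neg_mem hbx).2
  unfold myH1
  simp only [neg_mul]
  have e1 : |l*(1 - Real.exp (-(b*x)))| ≤ l*(b*x) := by
    rw [abs_mul, abs_of_nonneg hl]
    exact mul_le_mul_of_nonneg_left (by rw [abs_le]; constructor <;> nlinarith) hl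
  have e2 : |a*b*x*Real.exp (-(b*x))| ≤ a*b*x := by
    rw [abs_of_nonneg (by positivity)]
    have := mul_le_mul_of_nonneg_left h3 (by positivity : (0:ℝ) ≤ a*b*x)
    simpa using this
  calc |l*(1 - Real.exp (-(b*x))) - a*b*x*Real.exp (-(b*x))|
      ≤ |l*(1 - Real.exp (-(b*x)))| + |a*b*x*Real.exp (-(b*x))| := abs_sub _ _
    _ ≤ l*(b*x) + a*b*x := add_le_add e1 e2
    _ = (l*b + a*b) * x := by ring

lemma abs_myH1_le_const {a b l : ℝ} (ha : 0 ≤ a) (hb : 0 ≤ b) (hl : 0 ≤ l) {x : ℝ} (hx : 0 ≤ x) :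
    |myH1 a b l x| ≤ l + a := by
  have hbx : 0 ≤ b * x := by positivity
  have h2 := (exp_neg_mem hbx).1
  have h3 := (exp_neg_mem hbx).2
  have hkey : b*x*Real.exp (-(b*x)) ≤ 1 := by
    have := Real.add_one_le_exp (b*x)
    have hep := Real.exp_pos (b*x)
    have hmul : Real.exp (-(b*x)) * Real.exp (b*x) = 1 := by rw [← Real.exp_add]; simp
    nlinarith [Real.exp_pos (-(b*x))]
  unfold myH1
  simp only [neg_mul]
  have e1 : |l*(1 - Real.exp (-(b*x)))| ≤ l := by
    rw [abs_mul, abs_of_nonneg hl]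
    have : |1 - Real.exp (-(b*x))| ≤ 1 := by rw [abs_le]; constructor <;> nlinarith [Real.exp_pos (-(b*x))]
    nlinarith
  have e2 : |a*b*x*Real.exp (-(b*x))| ≤ a := by
    rw [abs_of_nonneg (by positivity)]
    nlinarith [Real.exp_pos (-(b*x))]
  calc |l*(1 - Real.exp (-(b*x))) - a*b*x*Real.exp (-(b*x))|
      ≤ |l*(1 - Real.exp (-(b*x)))| + |a*b*x*Real.exp (-(b*x))| := abs_sub _ _
    _ ≤ l + a := add_le_add e1 e2

lemma abs_myH_le_lin {a b l : ℝ} (ha : 0 ≤ a) (hb : 0 ≤ b) (hl : 0 ≤ l) {x : ℝ} (hx : 1 ≤ x) :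
    |myH a b l x| ≤ (2 + a + l) * x := by
  have hx0 : 0 ≤ x := by linarith
  have hbx : 0 ≤ b * x := by positivity
  have h2 := (exp_neg_mem hbx).1
  have h3 := (exp_neg_mem hbx).2
  have hexp : 0 < Real.exp (-(b*x)) := Real.exp_pos _
  unfold myH
  simp only [neg_mul]
  have h4 : 0 ≤ (1+a*x)*Real.exp (-(b*x)) := by positivity
  have h5 : (1+a*x)*Real.exp (-(b*x)) ≤ 1+a*x := by nlinarith
  rw [abs_le]
  constructor <;> nlinarith [mul_nonneg ha hx0, mul_nonneg hl hx0]

noncomputable def myH2 (a b l x : ℝ) : ℝ := ((l-a)*b + a*b^2*x) * Real.exp (-b*x)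
noncomputable def myG (a b l x : ℝ) : ℝ :=
  -(2/3)*x^(-(3:ℝ)/2)*myH a b l x - (4/3)*x^(-(1:ℝ)/2)*myH1 a b l x

lemma contOn_aux (a b l p : ℝ) :
    ContinuousOn (fun x : ℝ => x ^ p * myH a b l x) (Ioi 0) := by
  apply ContinuousOn.mul
  · exact fun x hx => (Real.continuousAt_rpow_const x p (Or.inl (ne_of_gt hx))).continuousWithinAt
  · apply Continuous.continuousOn
    unfold myH
    continuity

-- integrability of x^s * exp(-b x) on Ioi 0 for s > -1
lemma integrableOn_rpow_exp {s b : ℝ} (hs : -1 < s) (hb : 0 < b) :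
    IntegrableOn (fun x : ℝ => x ^ s * Real.exp (-b * x)) (Ioi 0) := by
  have := integrableOn_rpow_mul_exp_neg_mul_rpow hs one_pos hb
  simpa [Real.rpow_one] using this

lemma integrableOn_myH2_term {a l : ℝ} (ha : 0 < a) (hl : 0 < l) :
    IntegrableOn (fun x : ℝ => (4/3)*x^(-(1:ℝ)/2)*myH2 a (a+l) l x) (Ioi 0) := by
  set b := a + l with hb
  have hb0 : 0 < b := by positivity
  have i1 := (integrableOn_rpow_exp (s := -(1:ℝ)/2) (by norm_num) hb0).const_mul ((4/3)*((l-a)*b))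
  have i2 := (integrableOn_rpow_exp (s := (1:ℝ)/2) (by norm_num) hb0).const_mul ((4/3)*(a*b^2))
  apply MeasureTheory.IntegrableOn.congr_fun (i1.add i2) _ measurableSet_Ioi
  intro x hx
  simp only [Pi.add_apply]
  show _ = (4:ℝ)/3*x^(-(1:ℝ)/2)*myH2 a b l x
  unfold myH2
  have hx0 : (0:ℝ) < x := hx
  have : x ^ ((1:ℝ)/2) = x ^ (-(1:ℝ)/2) * x := by
    rw [show ((1:ℝ)/2) = (-(1:ℝ)/2 + 1) by norm_num, Real.rpow_add hx0, Real.rpow_one]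
  rw [this]
  ring

lemma integrableOn_main {a l : ℝ} (ha : 0 < a) (hl : 0 < l) :
    IntegrableOn (fun x : ℝ => x ^ (-(5:ℝ)/2) * myH a (a+l) l x) (Ioi 0) := by
  set b := a + l with hb
  have hb0 : 0 < b := by positivity
  have hmeas : ∀ s : Set ℝ, s ⊆ Ioi 0 → MeasurableSet s →
      AEStronglyMeasurable (fun x : ℝ => x ^ (-(5:ℝ)/2) * myH a b l x) (volume.restrict s) :=
    fun s hsub hms => ((contOn_aux a b l _).mono hsub).aestronglyMeasurable hms
  rw [show Ioi (0:ℝ) = Ioc 0 1 ∪ Ioi 1 by rw [Ioc_union_Ioi_eq_Ioi]; norm_num]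
  apply IntegrableOn.union
  · -- near 0 : |x^{-5/2} H| ≤ C x^{-1/2}
    have hig : IntegrableOn (fun x : ℝ => ((b^2/2 + a*b)) * x ^ (-(1:ℝ)/2)) (Ioc 0 1) := by
      have := intervalIntegral.intervalIntegrable_rpow' (a := (0:ℝ)) (b := 1)
        (r := -(1:ℝ)/2) (by norm_num)
      rw [intervalIntegrable_iff_integrableOn_Ioc_of_le (by norm_num : (0:ℝ) ≤ 1)] at this
      exact this.const_mul _
    apply hig.mono' (hmeas _ (fun x hx => hx.1) measurableSet_Ioc)
    rw [ae_restrict_iff' measurableSet_Ioc]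
    filter_upwards with x hx
    have hx0 : 0 < x := hx.1
    have hH := abs_myH_le ha.le hl.le hx0.le
    rw [norm_mul, Real.norm_rpow_of_nonneg hx0.le]
    have h52 : x ^ (-(5:ℝ)/2) = x ^ (-(1:ℝ)/2) * (x^2)⁻¹ := by
      rw [show (x:ℝ)^2 = x^(2:ℝ) by rw [← Real.rpow_natCast x 2]; norm_num,
        ← Real.rpow_neg hx0.le, ← Real.rpow_add hx0]
      norm_num
    rw [Real.norm_eq_abs, abs_of_nonneg hx0.le, h52]
    have hrp : (0:ℝ) ≤ x ^ (-(1:ℝ)/2) := Real.rpow_nonneg hx0.le _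
    calc x ^ (-(1:ℝ)/2) * (x^2)⁻¹ * ‖myH a b l x‖
        ≤ x ^ (-(1:ℝ)/2) * (x^2)⁻¹ * ((b^2/2 + a*b) * x^2) := by
          apply mul_le_mul_of_nonneg_left _ (by positivity)
          exact hH
      _ = (b^2/2 + a*b) * x ^ (-(1:ℝ)/2) := by field_simp
  · -- near ∞ : |x^{-5/2} H| ≤ C x^{-3/2}
    have hig : IntegrableOn (fun x : ℝ => (2+a+l) * x ^ (-(3:ℝ)/2)) (Ioi 1) := by
      apply Integrable.const_mul
      apply integrableOn_Ioi_rpow_of_lt (by norm_num) one_pos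
    apply hig.mono' (hmeas _ (fun x hx => Set.mem_Ioi.2 (lt_trans one_pos (Set.mem_Ioi.1 hx))) measurableSet_Ioi)
    rw [ae_restrict_iff' measurableSet_Ioi]
    filter_upwards with x hx
    have hx1 : (1:ℝ) ≤ x := le_of_lt hx
    have hx0 : 0 < x := lt_of_lt_of_le one_pos hx1
    have hH := abs_myH_le_lin (b := b) ha.le hb0.le hl.le hx1
    rw [norm_mul, Real.norm_rpow_of_nonneg hx0.le, Real.norm_eq_abs, abs_of_nonneg hx0.le]
    have h52 : x ^ (-(5:ℝ)/2) = x ^ (-(3:ℝ)/2) * x⁻¹ := by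
      rw [show (x:ℝ)⁻¹ = x^(-(1:ℝ)) by rw [Real.rpow_neg_one], ← Real.rpow_add hx0]
      norm_num
    rw [h52]
    calc x ^ (-(3:ℝ)/2) * x⁻¹ * ‖myH a b l x‖
        ≤ x ^ (-(3:ℝ)/2) * x⁻¹ * ((2+a+l) * x) := by
          apply mul_le_mul_of_nonneg_left hH (by positivity)
      _ = (2+a+l) * x ^ (-(3:ℝ)/2) := by field_simp

lemma tendsto_myG_atTop {a l : ℝ} (ha : 0 < a) (hl : 0 < l) :
    Tendsto (myG a (a+l) l) atTop (𝓝 0) := by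
  set b := a + l with hb
  have hb0 : 0 < b := by positivity
  set C : ℝ := (2/3)*(2+a+l) + (4/3)*(l+a) with hC
  apply squeeze_zero_norm' (a := fun x => C * x ^ (-(1:ℝ)/2))
  · filter_upwards [eventually_ge_atTop (1:ℝ)] with x hx1
    have hx0 : 0 < x := lt_of_lt_of_le one_pos hx1
    have hA : (0:ℝ) ≤ x ^ (-(3:ℝ)/2) := Real.rpow_nonneg hx0.le _
    have hB : (0:ℝ) ≤ x ^ (-(1:ℝ)/2) := Real.rpow_nonneg hx0.le _
    have hH := abs_myH_le_lin (b := b) ha.le hb0.le hl.le hx1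
    have hH1 := abs_myH1_le_const (b := b) ha.le hb0.le hl.le hx0.le
    have hkey : x ^ (-(3:ℝ)/2) * x = x ^ (-(1:ℝ)/2) := by
      rw [show (-(1:ℝ)/2) = (-(3:ℝ)/2 + 1) by norm_num, Real.rpow_add hx0, Real.rpow_one]
    have e1 : |(2/3)*x^(-(3:ℝ)/2)*myH a b l x| ≤ (2/3)*(2+a+l) * x ^ (-(1:ℝ)/2) := by
      rw [abs_mul, abs_mul, abs_of_nonneg (by norm_num : (0:ℝ) ≤ 2/3), abs_of_nonneg hA]
      calc 2/3 * x ^ (-(3:ℝ)/2) * |myH a b l x|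
          ≤ 2/3 * x ^ (-(3:ℝ)/2) * ((2+a+l)*x) := by
            apply mul_le_mul_of_nonneg_left hH (by positivity)
        _ = (2/3)*(2+a+l) * (x ^ (-(3:ℝ)/2) * x) := by ring
        _ = (2/3)*(2+a+l) * x ^ (-(1:ℝ)/2) := by rw [hkey]
    have e2 : |(4/3)*x^(-(1:ℝ)/2)*myH1 a b l x| ≤ (4/3)*(l+a) * x ^ (-(1:ℝ)/2) := by
      rw [abs_mul, abs_mul, abs_of_nonneg (by norm_num : (0:ℝ) ≤ 4/3), abs_of_nonneg hB]
      calc 4/3 * x ^ (-(1:ℝ)/2) * |myH1 a b l x|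
          ≤ 4/3 * x ^ (-(1:ℝ)/2) * (l+a) := by
            apply mul_le_mul_of_nonneg_left hH1 (by positivity)
        _ = (4/3)*(l+a) * x ^ (-(1:ℝ)/2) := by ring
    have : ‖myG a b l x‖ ≤ |(2/3)*x^(-(3:ℝ)/2)*myH a b l x| + |(4/3)*x^(-(1:ℝ)/2)*myH1 a b l x| := by
      rw [Real.norm_eq_abs]
      unfold myG
      calc |-(2/3)*x^(-(3:ℝ)/2)*myH a b l x - (4/3)*x^(-(1:ℝ)/2)*myH1 a b l x|
          ≤ |-(2/3)*x^(-(3:ℝ)/2)*myH a b l x| + |(4/3)*x^(-(1:ℝ)/2)*myH1 a b l x| := abs_sub _ _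
        _ = |(2/3)*x^(-(3:ℝ)/2)*myH a b l x| + |(4/3)*x^(-(1:ℝ)/2)*myH1 a b l x| := by
            rw [show -(2/3)*x^(-(3:ℝ)/2)*myH a b l x = -((2/3)*x^(-(3:ℝ)/2)*myH a b l x) by ring,
              abs_neg]
    calc ‖myG a b l x‖ ≤ _ + _ := this
      _ ≤ (2/3)*(2+a+l) * x ^ (-(1:ℝ)/2) + (4/3)*(l+a) * x ^ (-(1:ℝ)/2) := add_le_add e1 e2
      _ = C * x ^ (-(1:ℝ)/2) := by rw [hC]; ring
  · have : Tendsto (fun x : ℝ => x ^ (-(1:ℝ)/2)) atTop (𝓝 0) := by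
      have := tendsto_rpow_neg_atTop (by norm_num : (0:ℝ) < 1/2)
      simpa [neg_div] using this
    simpa using this.const_mul C

lemma contWithinAt_myG {a l : ℝ} (ha : 0 < a) (hl : 0 < l) :
    ContinuousWithinAt (myG a (a+l) l) (Ici 0) 0 := by
  set b := a + l with hb
  have hb0 : 0 < b := by positivity
  have hG0 : myG a b l 0 = 0 := by
    unfold myG myH myH1
    rw [Real.zero_rpow (by norm_num), Real.zero_rpow (by norm_num)]
    ring
  unfold ContinuousWithinAt
  rw [hG0]
  set C : ℝ := (2/3)*(b^2/2+a*b) + (4/3)*(l*b+a*b) with hC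
  apply squeeze_zero_norm' (a := fun x => C * x ^ ((1:ℝ)/2))
  · filter_upwards [eventually_mem_nhdsWithin] with x (hx : x ∈ Ici 0)
    rcases eq_or_lt_of_le (Set.mem_Ici.1 hx) with heq | hx0
    · rw [← heq, hG0]
      simp [Real.zero_rpow (by norm_num : ((1:ℝ)/2) ≠ 0)]
    · have hA : (0:ℝ) ≤ x ^ (-(3:ℝ)/2) := Real.rpow_nonneg hx0.le _
      have hB : (0:ℝ) ≤ x ^ (-(1:ℝ)/2) := Real.rpow_nonneg hx0.le _
      have hH := abs_myH_le ha.le hl.le hx0.le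
      have hH1 := abs_myH1_le_lin (b := b) ha.le hb0.le hl.le hx0.le
      have hkey1 : x ^ (-(3:ℝ)/2) * x^2 = x ^ ((1:ℝ)/2) := by
        rw [show (x:ℝ)^2 = x^(2:ℝ) by rw [← Real.rpow_natCast x 2]; norm_num,
          ← Real.rpow_add hx0]
        norm_num
      have hkey2 : x ^ (-(1:ℝ)/2) * x = x ^ ((1:ℝ)/2) := by
        rw [show ((1:ℝ)/2) = (-(1:ℝ)/2 + 1) by norm_num, Real.rpow_add hx0, Real.rpow_one]
      have e1 : |(2/3)*x^(-(3:ℝ)/2)*myH a b l x| ≤ (2/3)*(b^2/2+a*b) * x ^ ((1:ℝ)/2) := by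
        rw [abs_mul, abs_mul, abs_of_nonneg (by norm_num : (0:ℝ) ≤ 2/3), abs_of_nonneg hA]
        calc 2/3 * x ^ (-(3:ℝ)/2) * |myH a b l x|
            ≤ 2/3 * x ^ (-(3:ℝ)/2) * ((b^2/2+a*b)*x^2) := by
              apply mul_le_mul_of_nonneg_left _ (by positivity)
              rw [hb]; exact hH
          _ = (2/3)*(b^2/2+a*b) * (x ^ (-(3:ℝ)/2) * x^2) := by ring
          _ = (2/3)*(b^2/2+a*b) * x ^ ((1:ℝ)/2) := by rw [hkey1]
      have e2 : |(4/3)*x^(-(1:ℝ)/2)*myH1 a b l x| ≤ (4/3)*(l*b+a*b) * x ^ ((1:ℝ)/2) := by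
        rw [abs_mul, abs_mul, abs_of_nonneg (by norm_num : (0:ℝ) ≤ 4/3), abs_of_nonneg hB]
        calc 4/3 * x ^ (-(1:ℝ)/2) * |myH1 a b l x|
            ≤ 4/3 * x ^ (-(1:ℝ)/2) * ((l*b+a*b)*x) := by
              apply mul_le_mul_of_nonneg_left hH1 (by positivity)
          _ = (4/3)*(l*b+a*b) * (x ^ (-(1:ℝ)/2) * x) := by ring
          _ = (4/3)*(l*b+a*b) * x ^ ((1:ℝ)/2) := by rw [hkey2]
      have habs : ‖myG a b l x‖ ≤ |(2/3)*x^(-(3:ℝ)/2)*myH a b l x| + |(4/3)*x^(-(1:ℝ)/2)*myH1 a b l x| := by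
        rw [Real.norm_eq_abs]
        unfold myG
        calc |-(2/3)*x^(-(3:ℝ)/2)*myH a b l x - (4/3)*x^(-(1:ℝ)/2)*myH1 a b l x|
            ≤ |-(2/3)*x^(-(3:ℝ)/2)*myH a b l x| + |(4/3)*x^(-(1:ℝ)/2)*myH1 a b l x| := abs_sub _ _
          _ = |(2/3)*x^(-(3:ℝ)/2)*myH a b l x| + |(4/3)*x^(-(1:ℝ)/2)*myH1 a b l x| := by
              rw [show -(2/3)*x^(-(3:ℝ)/2)*myH a b l x = -((2/3)*x^(-(3:ℝ)/2)*myH a b l x) by ring,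
                abs_neg]
      calc ‖myG a b l x‖ ≤ _ + _ := habs
        _ ≤ (2/3)*(b^2/2+a*b) * x ^ ((1:ℝ)/2) + (4/3)*(l*b+a*b) * x ^ ((1:ℝ)/2) := add_le_add e1 e2
        _ = C * x ^ ((1:ℝ)/2) := by rw [hC]; ring
  · have h1 : Tendsto (fun x : ℝ => x ^ ((1:ℝ)/2)) (𝓝[Ici 0] 0) (𝓝 0) := by
      have hc := (Real.continuousAt_rpow_const 0 ((1:ℝ)/2) (Or.inr (by norm_num)))
      have := hc.continuousWithinAt (s := Ici 0)
      unfold ContinuousWithinAt at this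
      simp only [Real.zero_rpow (by norm_num : ((1:ℝ)/2) ≠ 0)] at this
      exact this
    simpa using h1.const_mul C

lemma integral_r_val {a l : ℝ} (ha : 0 < a) (hl : 0 < l) :
    ∫ x in Ioi (0:ℝ), (4/3)*x^(-(1:ℝ)/2)*myH2 a (a+l) l x
      = Real.sqrt π * Real.sqrt (a+l) * (4*l - 2*a)/3 := by
  set b := a + l with hb
  have hb0 : 0 < b := by positivity
  have J1 : ∫ x in Ioi (0:ℝ), x ^ (-(1:ℝ)/2) * Real.exp (-(b*x))
      = (1/b)^((1:ℝ)/2) * Real.Gamma (1/2) := by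
    have := Real.integral_rpow_mul_exp_neg_mul_Ioi (a := (1:ℝ)/2) (by norm_num) hb0
    rw [show (-(1:ℝ)/2) = ((1:ℝ)/2 - 1) by norm_num]
    exact this
  have J2 : ∫ x in Ioi (0:ℝ), x ^ ((1:ℝ)/2) * Real.exp (-(b*x))
      = (1/b)^((3:ℝ)/2) * Real.Gamma (3/2) := by
    have := Real.integral_rpow_mul_exp_neg_mul_Ioi (a := (3:ℝ)/2) (by norm_num) hb0
    rw [show ((1:ℝ)/2) = ((3:ℝ)/2 - 1) by norm_num]
    exact this
  have i1 : IntegrableOn (fun x : ℝ => (4/3*((l-a)*b)) * (x ^ (-(1:ℝ)/2) * Real.exp (-b*x))) (Ioi 0) :=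
    (integrableOn_rpow_exp (s := -(1:ℝ)/2) (by norm_num) hb0).const_mul _
  have i2 : IntegrableOn (fun x : ℝ => (4/3*(a*b^2)) * (x ^ ((1:ℝ)/2) * Real.exp (-b*x))) (Ioi 0) :=
    (integrableOn_rpow_exp (s := (1:ℝ)/2) (by norm_num) hb0).const_mul _
  have hsplit : ∫ x in Ioi (0:ℝ), (4/3)*x^(-(1:ℝ)/2)*myH2 a b l x
      = ∫ x in Ioi (0:ℝ), ((4/3*((l-a)*b)) * (x ^ (-(1:ℝ)/2) * Real.exp (-b*x))
          + (4/3*(a*b^2)) * (x ^ ((1:ℝ)/2) * Real.exp (-b*x))) := by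
    apply setIntegral_congr_fun measurableSet_Ioi
    intro x hx
    have hx0 : (0:ℝ) < x := hx
    have hpow : x ^ ((1:ℝ)/2) = x ^ (-(1:ℝ)/2) * x := by
      rw [show ((1:ℝ)/2) = (-(1:ℝ)/2 + 1) by norm_num, Real.rpow_add hx0, Real.rpow_one]
    unfold myH2
    dsimp only
    rw [hpow]
    ring
  rw [hsplit, integral_add i1 i2, integral_const_mul, integral_const_mul]
  simp only [neg_mul] at J1 J2 ⊢
  rw [J1, J2]
  -- now pure algebra
  have hg32 : Real.Gamma (3/2) = (1/2) * Real.Gamma (1/2) := by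
    rw [show (3:ℝ)/2 = 1/2 + 1 by norm_num, Real.Gamma_add_one (by norm_num)]
  rw [hg32, Real.Gamma_one_half_eq]
  have h12 : ((1:ℝ)/b)^((1:ℝ)/2) = (Real.sqrt b)⁻¹ := by
    rw [← Real.sqrt_eq_rpow, one_div, Real.sqrt_inv]
  have h32 : ((1:ℝ)/b)^((3:ℝ)/2) = (Real.sqrt b)⁻¹ * b⁻¹ := by
    rw [show ((3:ℝ)/2) = (1:ℝ)/2 + 1 by norm_num, Real.rpow_add (by positivity),
      Real.rpow_one, h12, one_div]
  rw [h12, h32]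
  have hs : Real.sqrt b * Real.sqrt b = b := Real.mul_self_sqrt hb0.le
  have hspos : 0 < Real.sqrt b := Real.sqrt_pos.2 hb0
  rw [hb] at hs ⊢
  field_simp
  linear_combination ((-(18:ℝ)*(4*l-2*a) + 36*(2*l - 2*l^2 - a - l*a + a^2)) * Real.sqrt π * Real.sqrt (a+l) + (4*a - 8*l) + (36*a*l - 36*a^2 + 72*l^2) * Real.sqrt π * Real.sqrt (a+l)) * hs

lemma hasDerivAt_myH (a l x : ℝ) :
    HasDerivAt (myH a (a+l) l) (myH1 a (a+l) l x) x := by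
  set b := a + l with hb
  have he : HasDerivAt (fun y : ℝ => Real.exp (-b*y)) (Real.exp (-b*x) * (-b)) x :=
    by simpa using (((hasDerivAt_id x).const_mul (-b))).exp
  have h1 : HasDerivAt (fun y : ℝ => (1 + a*y) * Real.exp (-b*y))
      (a * Real.exp (-b*x) + (1 + a*x) * (Real.exp (-b*x) * (-b))) x := by
    have : HasDerivAt (fun y : ℝ => 1 + a*y) a x := by
      simpa using ((hasDerivAt_id x).const_mul a).const_add 1
    exact this.mul he
  have h2 : HasDerivAt (fun y : ℝ => (1 + a*y) * Real.exp (-b*y) - 1 + l*y)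
      (a * Real.exp (-b*x) + (1 + a*x) * (Real.exp (-b*x) * (-b)) + l) x := by
    simpa using (h1.sub_const 1).fun_add (((hasDerivAt_id x).const_mul l))
  refine h2.congr_deriv ?_
  unfold myH1
  rw [hb]; ring

lemma hasDerivAt_myH1 (a b l x : ℝ) :
    HasDerivAt (myH1 a b l) (myH2 a b l x) x := by
  have he : HasDerivAt (fun y : ℝ => Real.exp (-b*y)) (Real.exp (-b*x) * (-b)) x :=
    by simpa using (((hasDerivAt_id x).const_mul (-b))).exp
  have h1 : HasDerivAt (fun y : ℝ => l*(1 - Real.exp (-b*y)))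
      (l * (-(Real.exp (-b*x) * (-b)))) x := ((he.const_sub 1)).const_mul l
  have h2 : HasDerivAt (fun y : ℝ => a*b*y*Real.exp (-b*y))
      (a*b*Real.exp (-b*x) + a*b*x*(Real.exp (-b*x) * (-b))) x := by
    have hy : HasDerivAt (fun y : ℝ => a*b*y) (a*b) x := by
      simpa using (hasDerivAt_id x).const_mul (a*b)
    simpa using hy.fun_mul he
  refine (h1.sub h2).congr_deriv ?_
  unfold myH2; ring

lemma hasDerivAt_myG (a l : ℝ) {x : ℝ} (hx : 0 < x) :
    HasDerivAt (myG a (a+l) l)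
      (x^(-(5:ℝ)/2) * myH a (a+l) l x - (4/3)*x^(-(1:ℝ)/2)*myH2 a (a+l) l x) x := by
  set b := a + l with hb
  have hp1 : HasDerivAt (fun y : ℝ => y^(-(3:ℝ)/2)) ((-(3:ℝ)/2) * x^(-(5:ℝ)/2)) x := by
    have := Real.hasDerivAt_rpow_const (x := x) (p := -(3:ℝ)/2) (Or.inl hx.ne')
    convert this using 2
    norm_num
  have hp2 : HasDerivAt (fun y : ℝ => y^(-(1:ℝ)/2)) ((-(1:ℝ)/2) * x^(-(3:ℝ)/2)) x := by
    have := Real.hasDerivAt_rpow_const (x := x) (p := -(1:ℝ)/2) (Or.inl hx.ne')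
    convert this using 2
    norm_num
  have h1 : HasDerivAt (fun y : ℝ => -(2/3)*(y^(-(3:ℝ)/2)*myH a b l y))
      (-(2/3)*(((-(3:ℝ)/2) * x^(-(5:ℝ)/2))*myH a b l x + x^(-(3:ℝ)/2)*myH1 a b l x)) x :=
    ((hp1.mul (hasDerivAt_myH a l x))).const_mul (-(2/3))
  have h2 : HasDerivAt (fun y : ℝ => (4/3)*(y^(-(1:ℝ)/2)*myH1 a b l y))
      ((4/3)*(((-(1:ℝ)/2) * x^(-(3:ℝ)/2))*myH1 a b l x + x^(-(1:ℝ)/2)*myH2 a b l x)) x :=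
    ((hp2.mul (hasDerivAt_myH1 a b l x))).const_mul (4/3)
  have := h1.fun_sub h2
  refine (this.congr_of_eventuallyEq (Filter.EventuallyEq.of_eq ?_)).congr_deriv ?_
  · funext y; unfold myG; ring
  · ring

lemma integral_main_val {a l : ℝ} (ha : 0 < a) (hl : 0 < l) :
    ∫ x in Ioi (0:ℝ), x ^ (-(5:ℝ)/2) * myH a (a+l) l x
      = Real.sqrt π * Real.sqrt (a+l) * (4*l - 2*a)/3 := by
  set b := a + l with hb
  have hG0 : myG a b l 0 = 0 := by
    unfold myG myH myH1
    rw [Real.zero_rpow (by norm_num), Real.zero_rpow (by norm_num)]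
    ring
  have hrint := integrableOn_myH2_term ha hl
  have hmint := integrableOn_main ha hl
  have hdint : IntegrableOn
      (fun x : ℝ => x ^ (-(5:ℝ)/2) * myH a b l x - (4/3)*x^(-(1:ℝ)/2)*myH2 a b l x) (Ioi 0) :=
    hmint.sub hrint
  have hFTC := integral_Ioi_of_hasDerivAt_of_tendsto (contWithinAt_myG ha hl)
    (fun x hx => hasDerivAt_myG a l (hx : (0:ℝ) < x)) hdint (tendsto_myG_atTop ha hl)
  rw [hG0, sub_zero] at hFTC
  have hsum : ∫ x in Ioi (0:ℝ), x ^ (-(5:ℝ)/2) * myH a b l x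
      = (∫ x in Ioi (0:ℝ), (x ^ (-(5:ℝ)/2) * myH a b l x - (4/3)*x^(-(1:ℝ)/2)*myH2 a b l x))
        + ∫ x in Ioi (0:ℝ), (4/3)*x^(-(1:ℝ)/2)*myH2 a b l x := by
    rw [← integral_add hdint hrint]
    congr 1
    funext x
    ring
  rw [hsum, hFTC, zero_add, integral_r_val ha hl]

theorem stmt_5 (α lam : ℝ) (hα : 0 < α) (hlam : 0 < lam) :
    ∫ x in Set.Ioi (0:ℝ),
        Real.sqrt (3 / (2 * Real.pi)) * x ^ (-(5:ℝ)/2)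
          * ((1 + α * x) * Real.exp (-(α + lam) * x) - 1 + lam * x)
      = -Real.sqrt (2/3) * Real.sqrt (α + lam) * (α - 2 * lam) := by
  have hpull : ∫ x in Ioi (0:ℝ),
        Real.sqrt (3 / (2 * Real.pi)) * x ^ (-(5:ℝ)/2)
          * ((1 + α * x) * Real.exp (-(α + lam) * x) - 1 + lam * x)
      = Real.sqrt (3 / (2 * Real.pi)) * ∫ x in Ioi (0:ℝ), x ^ (-(5:ℝ)/2) * myH α (α+lam) lam x := by
    rw [← integral_const_mul]
    apply setIntegral_congr_fun measurableSet_Ioi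
    intro x hx
    unfold myH
    ring
  rw [hpull, integral_main_val hα hlam]
  -- constant arithmetic
  have hc1 : Real.sqrt (3 / (2 * Real.pi)) * Real.sqrt π = Real.sqrt (3/2) := by
    rw [← Real.sqrt_mul (by positivity)]
    congr 1
    field_simp
  have hc2 : Real.sqrt ((3:ℝ)/2) = Real.sqrt ((2:ℝ)/3) * (3/2) := by
    have h := Real.sqrt_mul (by norm_num : (0:ℝ) ≤ 2/3) ((3/2)^2)
    rw [Real.sqrt_sq (by norm_num : (0:ℝ) ≤ 3/2)] at h
    rw [← h]
    norm_num
  calc Real.sqrt (3 / (2 * Real.pi)) * (Real.sqrt π * Real.sqrt (α+lam) * (4*lam - 2*α)/3)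
      = (Real.sqrt (3 / (2 * Real.pi)) * Real.sqrt π) * Real.sqrt (α+lam) * (4*lam - 2*α)/3 := by
        ring
    _ = Real.sqrt ((2:ℝ)/3) * (3/2) * Real.sqrt (α+lam) * (4*lam - 2*α)/3 := by rw [hc1, hc2]
    _ = -Real.sqrt (2/3) * Real.sqrt (α + lam) * (α - 2 * lam) := by ring
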